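/- For every real number c2, the Cartan coordinates (π/2, c2, 0) of a special perfect entangler give entangling power e_p(π/2, c2, 0) = 2/9 (the maximum value), and the mean squared chord length satisfies (1/6)·Σ_{1≤j<k≤4} |e^{i h_j} − e^{i h_k}|² = 8/3, where h1 = π/2 − c2, h2 = π/2 + c2, h3 = −π/2 − c2, h4 = −π/2 + c2. -/

import Mathlib

open Matrix Complex
open scoped Matrix Kronecker

noncomputable section

/-- h₁ = c₁−c₂+c₃, h₂ = c₁+c₂−c₃, h₃ = −c₁−c₂−c₃, h₄ = −c₁+c₂+c₃ -/
def hval (c1 c2 c3 : ℝ) : Fin 4 → ℝ :=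
  ![c1 - c2 + c3, c1 + c2 - c3, -c1 - c2 - c3, -c1 + c2 + c3]


lemma chord (a b : ℝ) :
    ‖Complex.exp (Complex.I * (a : ℂ)) - Complex.exp (Complex.I * (b : ℂ))‖ ^ 2
      = 2 - 2 * Real.cos (a - b) := by
  rw [mul_comm Complex.I (a:ℂ), mul_comm Complex.I (b:ℂ), Complex.exp_mul_I,
    Complex.exp_mul_I, ← Complex.normSq_eq_norm_sq]
  simp only [Complex.sq_norm, Complex.normSq_apply, Complex.add_re, Complex.sub_re,
    Complex.add_im, Complex.sub_im, Complex.mul_re, Complex.mul_im, Complex.I_re,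
    Complex.I_im, Complex.ofReal_cos, Complex.ofReal_sin, Complex.cos_ofReal_re,
    Complex.cos_ofReal_im, Complex.sin_ofReal_re, Complex.sin_ofReal_im, Real.cos_sub]
  nlinarith [Real.sin_sq_add_cos_sq a, Real.sin_sq_add_cos_sq b]

/-- For Cartan coordinates (π/2, c₂, 0) of a special perfect entangler, the entangling
power is 2/9 (the maximum) and the mean squared chord length is 8/3. -/
theorem stmt10 (c2 : ℝ) :
    (1 / 18 : ℝ) * (3 - (Real.cos (2 * (Real.pi / 2)) * Real.cos (2 * c2) +
        Real.cos (2 * c2) * Real.cos (2 * (0 : ℝ)) +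
        Real.cos (2 * (0 : ℝ)) * Real.cos (2 * (Real.pi / 2)))) = 2 / 9 ∧
    (1 / 6 : ℝ) *
      (‖Complex.exp (Complex.I * (hval (Real.pi / 2) c2 0 0 : ℂ)) -
          Complex.exp (Complex.I * (hval (Real.pi / 2) c2 0 1 : ℂ))‖ ^ 2 +
        ‖Complex.exp (Complex.I * (hval (Real.pi / 2) c2 0 0 : ℂ)) -
          Complex.exp (Complex.I * (hval (Real.pi / 2) c2 0 2 : ℂ))‖ ^ 2 +
        ‖Complex.exp (Complex.I * (hval (Real.pi / 2) c2 0 0 : ℂ)) -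
          Complex.exp (Complex.I * (hval (Real.pi / 2) c2 0 3 : ℂ))‖ ^ 2 +
        ‖Complex.exp (Complex.I * (hval (Real.pi / 2) c2 0 1 : ℂ)) -
          Complex.exp (Complex.I * (hval (Real.pi / 2) c2 0 2 : ℂ))‖ ^ 2 +
        ‖Complex.exp (Complex.I * (hval (Real.pi / 2) c2 0 1 : ℂ)) -
          Complex.exp (Complex.I * (hval (Real.pi / 2) c2 0 3 : ℂ))‖ ^ 2 +
        ‖Complex.exp (Complex.I * (hval (Real.pi / 2) c2 0 2 : ℂ)) -
          Complex.exp (Complex.I * (hval (Real.pi / 2) c2 0 3 : ℂ))‖ ^ 2) = 8 / 3 := by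
  constructor
  · rw [show 2*(Real.pi/2)=Real.pi by ring]; simp [Real.cos_pi]; ring
  · have h01 := chord (Real.pi/2 - c2) (Real.pi/2 + c2)
    have h02 := chord (Real.pi/2 - c2) (-(Real.pi/2) - c2)
    have h03 := chord (Real.pi/2 - c2) (-(Real.pi/2) + c2)
    have h12 := chord (Real.pi/2 + c2) (-(Real.pi/2) - c2)
    have h13 := chord (Real.pi/2 + c2) (-(Real.pi/2) + c2)
    have h23 := chord (-(Real.pi/2) - c2) (-(Real.pi/2) + c2)
    simp only [hval, Matrix.cons_val_zero, Matrix.cons_val_one, Matrix.head_cons,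
      Matrix.cons_val_two, Matrix.tail_cons, Matrix.cons_val_three] at *
    rw [show Real.pi/2 - c2 + 0 = Real.pi/2 - c2 by ring,
      show Real.pi/2 + c2 - 0 = Real.pi/2 + c2 by ring,
      show -(Real.pi/2) - c2 - 0 = -(Real.pi/2) - c2 by ring,
      show -(Real.pi/2) + c2 + 0 = -(Real.pi/2) + c2 by ring] at *
    rw [h01, h02, h03, h12, h13, h23]
    have e1 : Real.pi/2 - c2 - (Real.pi/2 + c2) = -(2*c2) := by ring
    have e2 : Real.pi/2 - c2 - (-(Real.pi/2) - c2) = Real.pi := by ring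
    have e3 : Real.pi/2 - c2 - (-(Real.pi/2) + c2) = Real.pi - 2*c2 := by ring
    have e4 : Real.pi/2 + c2 - (-(Real.pi/2) - c2) = Real.pi + 2*c2 := by ring
    have e5 : Real.pi/2 + c2 - (-(Real.pi/2) + c2) = Real.pi := by ring
    have e6 : -(Real.pi/2) - c2 - (-(Real.pi/2) + c2) = -(2*c2) := by ring
    have e7 : Real.cos (Real.pi + 2*c2) = -Real.cos (2*c2) := by
      rw [Real.cos_add, Real.cos_pi, Real.sin_pi]; ring
    rw [e1, e2, e3, e4, e5, e6, Real.cos_pi, Real.cos_pi_sub, e7, Real.cos_neg]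
    ring
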